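/- Fix integers β ≥ 1 and n, and reals p ∈ (0,1], q ∈ [p,1] such that pn/q and tpn/β (for t = 0,…,β) are integers. Suppose Stage 1 draws U as a uniformly random subset of [n] of size (p/q)n, and Stage 2, conditional on U, assigns each z^t to have its treated set a uniformly random subset of U of size tpn/β (units outside U untreated). Then E[ TTE-hat ] − TTE = (1/n) Σ_{i=1}^{n} Σ_{∅ ≠ S ⊆ N_i, |S| ≤ β} c_{i,S} · ( (q/p)·[ (p/q)n / n ]_{|S|} − 1 ). -/

import Mathlib

open Finset

/-- The Lagrange rollout coefficients
`h_{t,q} = ∏_{s=0,s≠t}^{β} ((β/q − s)/(t − s)) − ∏_{s=0,s≠t}^{β} ((−s)/(t − s))`. -/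
noncomputable def hcoef (β : ℕ) (q : ℝ) (t : ℕ) : ℝ :=
  (∏ s ∈ (Finset.range (β + 1)).erase t, (((β : ℝ) / q - (s : ℝ)) / ((t : ℝ) - (s : ℝ)))) -
  (∏ s ∈ (Finset.range (β + 1)).erase t, ((-(s : ℝ)) / ((t : ℝ) - (s : ℝ))))

/-- The falling-ratio bracket `[k/N]_m = ∏_{i=0}^{m−1} (k−i)/(N−i)`. -/
noncomputable def brak (k N : ℝ) (m : ℕ) : ℝ :=
  ∏ i ∈ Finset.range m, (k - (i : ℝ)) / (N - (i : ℝ))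

section AuxLemmas
open Polynomial

-- counting lemma
lemma count_contain {α : Type*} [DecidableEq α] (S V : Finset α) (m' : ℕ)
    (hSV : S ⊆ V) (hk : S.card ≤ m') :
    ((V.powersetCard m').filter (fun A => S ⊆ A)).card
      = (V.card - S.card).choose (m' - S.card) := by
  have key : ((V.powersetCard m').filter (fun A => S ⊆ A)).card
      = ((V \ S).powersetCard (m' - S.card)).card := by
    apply Finset.card_bij' (fun A _ => A \ S) (fun B _ => B ∪ S)
    · intro A hA
      simp only [mem_filter, mem_powersetCard] at hA ⊢
      obtain ⟨⟨hAV, hAc⟩, hSA⟩ := hA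
      exact ⟨sdiff_subset_sdiff hAV (le_refl S), by rw [card_sdiff_of_subset hSA, hAc]⟩
    · intro B hB
      rw [mem_powersetCard] at hB
      obtain ⟨hBV, hBc⟩ := hB
      have hdisj : Disjoint B S := disjoint_of_subset_left hBV sdiff_disjoint
      simp only [mem_filter, mem_powersetCard]
      refine ⟨⟨union_subset (hBV.trans sdiff_subset) hSV, ?_⟩, subset_union_right⟩
      rw [card_union_of_disjoint hdisj, hBc]
      omega
    · intro A hA
      simp only [mem_filter] at hA
      exact sdiff_union_of_subset hA.2
    · intro B hB
      rw [mem_powersetCard] at hB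
      have hdisj : Disjoint B S := disjoint_of_subset_left hB.1 sdiff_disjoint
      exact union_sdiff_cancel_right hdisj
  rw [key, Finset.card_powersetCard, card_sdiff_of_subset hSV]

-- binomial ratio lemma
lemma choose_ratio (k mm nn : ℕ) (hk : k ≤ mm) (hmn : mm ≤ nn) :
    (((nn - k).choose (mm - k) : ℝ)) * ∏ i ∈ Finset.range k, ((nn : ℝ) - i)
      = (nn.choose mm : ℝ) * ∏ i ∈ Finset.range k, ((mm : ℝ) - i) := by
  induction k with
  | zero => simp
  | succ k ih =>
    have hk' : k ≤ mm := Nat.le_of_succ_le hk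
    have hkm : k < mm := hk
    have hkn : k < nn := lt_of_lt_of_le hkm hmn
    have hnat : (nn - k) * ((nn - k - 1).choose (mm - k - 1))
        = ((nn - k).choose (mm - k)) * (mm - k) := by
      have := Nat.add_one_mul_choose_eq (nn - k - 1) (mm - k - 1)
      have h1 : (nn - k - 1) + 1 = nn - k := by omega
      have h2 : (mm - k - 1) + 1 = mm - k := by omega
      rw [h1, h2] at this
      exact this
    rw [Finset.prod_range_succ, Finset.prod_range_succ]
    have e1 : nn - (k+1) = nn - k - 1 := by omega
    have e2 : mm - (k+1) = mm - k - 1 := by omega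
    rw [e1, e2]
    have hcast : ((nn : ℝ) - k) = ((nn - k : ℕ) : ℝ) := by
      push_cast [Nat.cast_sub (le_of_lt hkn)]; ring
    have hcast2 : ((mm : ℝ) - k) = ((mm - k : ℕ) : ℝ) := by
      push_cast [Nat.cast_sub (le_of_lt hkm)]; ring
    calc ((nn - k - 1).choose (mm - k - 1) : ℝ) * ((∏ i ∈ Finset.range k, ((nn:ℝ) - i)) * ((nn:ℝ) - k))
        = (((nn - k) * ((nn - k - 1).choose (mm - k - 1)) : ℕ) : ℝ) * ∏ i ∈ Finset.range k, ((nn:ℝ) - i) := by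
          rw [hcast]; push_cast; ring
      _ = ((((nn - k).choose (mm - k)) * (mm - k) : ℕ) : ℝ) * ∏ i ∈ Finset.range k, ((nn:ℝ) - i) := by
          rw [hnat]
      _ = ((mm:ℝ) - k) * (((nn - k).choose (mm - k) : ℝ) * ∏ i ∈ Finset.range k, ((nn:ℝ) - i)) := by
          rw [hcast2]; push_cast; ring
      _ = ((mm:ℝ) - k) * ((nn.choose mm : ℝ) * ∏ i ∈ Finset.range k, ((mm:ℝ) - i)) := by rw [ih hk']
      _ = (nn.choose mm : ℝ) * ((∏ i ∈ Finset.range k, ((mm:ℝ) - i)) * ((mm:ℝ) - k)) := by ring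

-- Lagrange evaluation lemma
lemma lag_eval (β : ℕ) (x : ℝ) (P : ℝ[X]) (hP : P.degree < (β + 1 : ℕ)) :
    ∑ t ∈ Finset.range (β + 1),
      (∏ s ∈ (Finset.range (β + 1)).erase t, ((x - (s:ℝ)) / ((t:ℝ) - (s:ℝ)))) * P.eval ((t:ℕ) : ℝ)
      = P.eval x := by
  have hinj : Set.InjOn (fun (i : ℕ) => (i : ℝ)) (Finset.range (β + 1)) :=
    fun a _ b _ h => Nat.cast_injective h
  have hdeg : P.degree < (Finset.range (β + 1)).card := by
    rwa [Finset.card_range]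
  have hint := Lagrange.eq_interpolate hinj hdeg
  conv_rhs => rw [hint]
  rw [Lagrange.interpolate_apply, Polynomial.eval_finset_sum]
  refine Finset.sum_congr rfl fun t _ => ?_
  rw [Polynomial.eval_mul, Polynomial.eval_C, Lagrange.basis, Polynomial.eval_prod]
  rw [mul_comm]
  congr 1
  refine Finset.prod_congr rfl fun s _ => ?_
  rw [Lagrange.basisDivisor, Polynomial.eval_mul, Polynomial.eval_C, Polynomial.eval_sub,
    Polynomial.eval_X, Polynomial.eval_C]
  rw [div_eq_inv_mul]


-- probability lemma
lemma prob_lemma {n u mt : ℕ} {Ω : Type} [Fintype Ω] (w : Ω → ℝ)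
    (U : Ω → Finset (Fin n)) (Zt : Ω → Finset (Fin n))
    (hun : u ≤ n) (hmu : mt ≤ u)
    (hUcard : ∀ ω, (U ω).card = u)
    (hUunif : ∀ V : Finset (Fin n), V.card = u →
      (∑ ω ∈ Finset.univ.filter (fun ω => U ω = V), w ω) = 1 / (n.choose u : ℝ))
    (hZU : ∀ ω, Zt ω ⊆ U ω) (hZcard : ∀ ω, (Zt ω).card = mt)
    (hZunif : ∀ V A : Finset (Fin n), A ⊆ V → A.card = mt →
      (∑ ω ∈ Finset.univ.filter (fun ω => U ω = V ∧ Zt ω = A), w ω) =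
        (1 / (u.choose mt : ℝ)) * ∑ ω ∈ Finset.univ.filter (fun ω => U ω = V), w ω)
    (S : Finset (Fin n)) :
    ∑ ω, w ω * ∏ j ∈ S, (if j ∈ Zt ω then (1:ℝ) else 0)
      = ∏ i ∈ Finset.range S.card, ((mt : ℝ) - i) / ((n : ℝ) - i) := by
  classical
  have hind : ∀ ω, (∏ j ∈ S, (if j ∈ Zt ω then (1:ℝ) else 0))
      = if S ⊆ Zt ω then 1 else 0 := by
    intro ω
    rw [Finset.prod_boole]
    simp [Finset.subset_iff]
  rcases le_or_gt S.card mt with hk | hk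
  · -- main case
    have hkn : S.card ≤ n := le_trans hk (le_trans hmu hun)
    have hku : S.card ≤ u := le_trans hk hmu
    set c0 : ℝ := (1 / (u.choose mt : ℝ)) * (1 / (n.choose u : ℝ)) with hc0
    have fib : ∀ (V A : Finset (Fin n)),
        (∑ ω ∈ Finset.univ.filter (fun ω => U ω = V ∧ Zt ω = A), w ω)
          = if (V.card = u ∧ A ⊆ V ∧ A.card = mt) then c0 else 0 := by
      intro V A
      split_ifs with h
      · obtain ⟨h1, h2, h3⟩ := h
        rw [hZunif V A h2 h3, hUunif V h1, hc0]
      · apply Finset.sum_eq_zero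
        intro ω hω
        simp only [mem_filter] at hω
        obtain ⟨-, hUV, hZA⟩ := hω
        exact absurd ⟨by rw [← hUV]; exact hUcard ω,
          by rw [← hUV, ← hZA]; exact hZU ω, by rw [← hZA]; exact hZcard ω⟩ h
    calc ∑ ω, w ω * ∏ j ∈ S, (if j ∈ Zt ω then (1:ℝ) else 0)
        = ∑ ω, w ω * (if S ⊆ Zt ω then 1 else 0) :=
          Finset.sum_congr rfl fun ω _ => by rw [hind]
      _ = ∑ x : Finset (Fin n) × Finset (Fin n),
            ∑ ω ∈ Finset.univ.filter (fun ω => (U ω, Zt ω) = x),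
              w ω * (if S ⊆ Zt ω then 1 else 0) :=
          (Finset.sum_fiberwise Finset.univ (fun ω => (U ω, Zt ω)) _).symm
      _ = ∑ x : Finset (Fin n) × Finset (Fin n),
            (if S ⊆ x.2 then (1:ℝ) else 0) *
              ∑ ω ∈ Finset.univ.filter (fun ω => U ω = x.1 ∧ Zt ω = x.2), w ω := by
          refine Finset.sum_congr rfl fun x _ => ?_
          rw [Finset.mul_sum]
          have hfeq : Finset.univ.filter (fun ω => (U ω, Zt ω) = x)
              = Finset.univ.filter (fun ω => U ω = x.1 ∧ Zt ω = x.2) := by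
            apply Finset.filter_congr; intro ω _; simp [Prod.ext_iff]
          rw [hfeq]
          refine Finset.sum_congr rfl fun ω hω => ?_
          simp only [mem_filter] at hω
          rw [hω.2.2]; ring
      _ = ∑ x : Finset (Fin n) × Finset (Fin n),
            (if (S ⊆ x.2 ∧ (x.1.card = u ∧ x.2 ⊆ x.1 ∧ x.2.card = mt)) then c0 else 0) := by
          refine Finset.sum_congr rfl fun x _ => ?_
          rw [fib x.1 x.2, ite_mul, one_mul, zero_mul, ← ite_and]
      _ = ∑ V : Finset (Fin n), ∑ A : Finset (Fin n),
            (if (S ⊆ A ∧ (V.card = u ∧ A ⊆ V ∧ A.card = mt)) then c0 else 0) :=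
          Fintype.sum_prod_type _
      _ = ∑ V : Finset (Fin n),
            (if (V.card = u ∧ S ⊆ V) then (((u - S.card).choose (mt - S.card) : ℕ) : ℝ) * c0
              else 0) := by
          refine Finset.sum_congr rfl fun V _ => ?_
          by_cases hV : V.card = u
          · have hmem : ∀ A : Finset (Fin n),
                (if (S ⊆ A ∧ (V.card = u ∧ A ⊆ V ∧ A.card = mt)) then c0 else 0)
                  = if (A ∈ (V.powersetCard mt).filter (fun A => S ⊆ A)) then c0 else 0 := by
              intro A
              congr 1
              simp only [mem_filter, mem_powersetCard, eq_iff_iff]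
              tauto
            rw [Finset.sum_congr rfl fun A _ => hmem A, Finset.sum_ite_mem,
              Finset.univ_inter, Finset.sum_const, nsmul_eq_mul]
            by_cases hSV : S ⊆ V
            · rw [count_contain S V mt hSV hk, hV, if_pos ⟨rfl, hSV⟩]
            · have hemp : (V.powersetCard mt).filter (fun A => S ⊆ A) = ∅ := by
                apply Finset.filter_eq_empty_iff.mpr
                intro A hA
                rw [mem_powersetCard] at hA
                exact fun hSA => hSV (hSA.trans hA.1)
              rw [hemp, if_neg (fun h => hSV h.2)]
              simp
          · rw [if_neg (fun h => hV h.1)]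
            apply Finset.sum_eq_zero
            intro A _
            exact if_neg (fun h => hV h.2.1)
      _ = (((n - S.card).choose (u - S.card) : ℕ) : ℝ) *
            ((((u - S.card).choose (mt - S.card) : ℕ) : ℝ) * c0) := by
          have hmem : ∀ V : Finset (Fin n),
              (if (V.card = u ∧ S ⊆ V) then (((u - S.card).choose (mt - S.card) : ℕ) : ℝ) * c0
                else 0)
                = if (V ∈ ((Finset.univ : Finset (Fin n)).powersetCard u).filter
                    (fun V => S ⊆ V)) then (((u - S.card).choose (mt - S.card) : ℕ) : ℝ) * c0
                  else 0 := by
            intro V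
            congr 1
            simp only [mem_filter, mem_powersetCard, eq_iff_iff, Finset.subset_univ, true_and]
          rw [Finset.sum_congr rfl fun V _ => hmem V, Finset.sum_ite_mem,
            Finset.univ_inter, Finset.sum_const, nsmul_eq_mul,
            count_contain S Finset.univ u (Finset.subset_univ S) hku,
            Finset.card_univ, Fintype.card_fin]
      _ = ∏ i ∈ Finset.range S.card, ((mt : ℝ) - i) / ((n : ℝ) - i) := by
          have h1 := choose_ratio S.card u n hku hun
          have h2 := choose_ratio S.card mt u hk hmu
          have hA : (0:ℝ) < ∏ i ∈ Finset.range S.card, ((n : ℝ) - i) := by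
            apply Finset.prod_pos
            intro i hi
            rw [Finset.mem_range] at hi
            have : (i:ℝ) < (n:ℝ) := by exact_mod_cast lt_of_lt_of_le hi hkn
            linarith
          have hB : (0:ℝ) < ∏ i ∈ Finset.range S.card, ((u : ℝ) - i) := by
            apply Finset.prod_pos
            intro i hi
            rw [Finset.mem_range] at hi
            have : (i:ℝ) < (u:ℝ) := by exact_mod_cast lt_of_lt_of_le hi hku
            linarith
          have hD1 : ((n.choose u : ℝ)) ≠ 0 := by
            exact_mod_cast (Nat.choose_pos hun).ne'
          have hD2 : ((u.choose mt : ℝ)) ≠ 0 := by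
            exact_mod_cast (Nat.choose_pos hmu).ne'
          rw [Finset.prod_div_distrib, hc0, eq_div_iff hA.ne']
          field_simp
          linear_combination ((u - S.card).choose (mt - S.card) : ℝ) * h1
            + (n.choose u : ℝ) * h2
  · -- degenerate case: S.card > mt
    have hLHS : ∑ ω, w ω * ∏ j ∈ S, (if j ∈ Zt ω then (1:ℝ) else 0) = 0 := by
      apply Finset.sum_eq_zero
      intro ω _
      rw [hind ω, if_neg, mul_zero]
      intro hsub
      have := Finset.card_le_card hsub
      rw [hZcard ω] at this
      omega
    rw [hLHS]
    have hmem : mt ∈ Finset.range S.card := Finset.mem_range.mpr hk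
    rw [eq_comm]
    apply Finset.prod_eq_zero hmem
    rw [sub_self, zero_div]


lemma hcoef_sum (β : ℕ) (hβ : 1 ≤ β) (p q : ℝ) (hq : q ≠ 0) (n u : ℕ) (m : ℕ → ℕ)
    (hu : (u : ℝ) = p * n / q)
    (hm : ∀ t, t ≤ β → (m t : ℝ) = t * p * n / β)
    (k : ℕ) (hk : k ≤ β) :
    ∑ t ∈ Finset.range (β + 1),
        hcoef β q t * ∏ i ∈ Finset.range k, ((m t : ℝ) - i) / ((n : ℝ) - i)
      = brak (u : ℝ) (n : ℝ) k - (if k = 0 then 1 else 0) := by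
  have hβ0 : ((β : ℝ)) ≠ 0 := Nat.cast_ne_zero.mpr (by omega)
  set P : Polynomial ℝ := ∏ i ∈ Finset.range k,
    (Polynomial.C ((p * n / β) / ((n : ℝ) - i)) * Polynomial.X
      + Polynomial.C (-((i : ℝ) / ((n : ℝ) - i)))) with hP
  have hnd : P.natDegree ≤ k := by
    refine le_trans (Polynomial.natDegree_prod_le _ _) ?_
    refine le_trans (Finset.sum_le_sum fun i _ => Polynomial.natDegree_linear_le) ?_
    simp
  have hdeg : P.degree < ((β + 1 : ℕ) : WithBot ℕ) := by
    refine lt_of_le_of_lt Polynomial.degree_le_natDegree ?_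
    exact_mod_cast Nat.lt_succ_of_le (le_trans hnd hk)
  have heval : ∀ y : ℝ, P.eval y
      = ∏ i ∈ Finset.range k, ((p * n / β) * y - i) / ((n : ℝ) - i) := by
    intro y
    rw [hP, Polynomial.eval_prod]
    refine Finset.prod_congr rfl fun i _ => ?_
    simp only [Polynomial.eval_add, Polynomial.eval_mul, Polynomial.eval_C, Polynomial.eval_X]
    ring
  have hgt : ∀ t ∈ Finset.range (β + 1),
      (∏ i ∈ Finset.range k, ((m t : ℝ) - i) / ((n : ℝ) - i)) = P.eval ((t : ℕ) : ℝ) := by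
    intro t ht
    rw [heval]
    refine Finset.prod_congr rfl fun i _ => ?_
    rw [hm t (Nat.lt_succ_iff.mp (Finset.mem_range.mp ht))]
    ring
  have key : ∑ t ∈ Finset.range (β + 1),
      hcoef β q t * ∏ i ∈ Finset.range k, ((m t : ℝ) - i) / ((n : ℝ) - i)
      = P.eval ((β : ℝ) / q) - P.eval 0 := by
    rw [← lag_eval β ((β : ℝ) / q) P hdeg, ← lag_eval β 0 P hdeg, ← Finset.sum_sub_distrib]
    refine Finset.sum_congr rfl fun t ht => ?_
    rw [hcoef, sub_mul, hgt t ht]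
    congr 2
    refine Finset.prod_congr rfl fun s _ => ?_
    rw [zero_sub]
  rw [key]
  have h1 : P.eval ((β : ℝ) / q) = brak (u : ℝ) (n : ℝ) k := by
    rw [heval, brak]
    refine Finset.prod_congr rfl fun i _ => ?_
    congr 1
    rw [hu]
    field_simp
  have h2 : P.eval 0 = if k = 0 then 1 else 0 := by
    rw [heval]
    split_ifs with h
    · rw [h]; simp
    · apply Finset.prod_eq_zero (Finset.mem_range.mpr (Nat.pos_of_ne_zero h))
      norm_num
  rw [h1, h2]


end AuxLemmas

/-- bias of the two-stage Unit CRD Rollout Design. Stage 1 draws `U` as a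
uniformly random subset of `[n]` of size `(p/q)n`; Stage 2, conditional on `U`, assigns
each `Z t` to be a uniformly random subset of `U` of size `tpn/β` (units outside `U`
untreated). Then
`E[TTE-hat] − TTE = (1/n) Σ_i Σ_{∅ ≠ S ⊆ N_i, |S| ≤ β} c_{i,S}·((q/p)·[(p/q)n/n]_{|S|} − 1)`. -/
theorem stmt_9 (β n : ℕ) (hβ : 1 ≤ β)
    (p q : ℝ) (hp0 : 0 < p) (hp1 : p ≤ 1) (hpq : p ≤ q) (hq1 : q ≤ 1)
    (Nbhd : Fin n → Finset (Fin n)) (c : Fin n → Finset (Fin n) → ℝ)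
    (u : ℕ) (hu : (u : ℝ) = p * (n : ℝ) / q)
    (m : ℕ → ℕ) (hm : ∀ t, t ≤ β → (m t : ℝ) = (t : ℝ) * p * (n : ℝ) / (β : ℝ))
    (hmu : m β ≤ u)
    (Ω : Type) [Fintype Ω]
    (w : Ω → ℝ) (hw0 : ∀ ω, 0 ≤ w ω) (hw1 : ∑ ω, w ω = 1)
    (U : Ω → Finset (Fin n)) (hUcard : ∀ ω, (U ω).card = u)
    (hUunif : ∀ V : Finset (Fin n), V.card = u →
      (∑ ω ∈ Finset.univ.filter (fun ω => U ω = V), w ω) = 1 / (n.choose u : ℝ))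
    (Z : ℕ → Ω → Finset (Fin n))
    (hZU : ∀ t, t ≤ β → ∀ ω, Z t ω ⊆ U ω)
    (hZcard : ∀ t, t ≤ β → ∀ ω, (Z t ω).card = m t)
    (hZunif : ∀ t, t ≤ β → ∀ V A : Finset (Fin n), A ⊆ V → A.card = m t →
      (∑ ω ∈ Finset.univ.filter (fun ω => U ω = V ∧ Z t ω = A), w ω) =
        (1 / (u.choose (m t) : ℝ)) * ∑ ω ∈ Finset.univ.filter (fun ω => U ω = V), w ω) :
    (∑ ω, w ω * ((q / ((n : ℝ) * p)) * ∑ t ∈ Finset.range (β + 1), hcoef β q t *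
        ∑ i, ∑ S ∈ (Nbhd i).powerset.filter (fun S => S.card ≤ β),
          c i S * ∏ j ∈ S, (if j ∈ Z t ω then (1 : ℝ) else 0))) -
      (1 / (n : ℝ)) * (∑ i, ∑ S ∈ (Nbhd i).powerset.filter
          (fun S => S.Nonempty ∧ S.card ≤ β), c i S) =
      (1 / (n : ℝ)) *
        ∑ i, ∑ S ∈ (Nbhd i).powerset.filter (fun S => S.Nonempty ∧ S.card ≤ β),
          c i S * ((q / p) * brak (u : ℝ) (n : ℝ) S.card - 1) := by
  classical
  rcases Nat.eq_zero_or_pos n with hn0 | hn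
  · subst hn0
    simp
  · -- main case
    have hq0 : (0:ℝ) < q := lt_of_lt_of_le hp0 hpq
    have hn' : (0:ℝ) < (n:ℝ) := by exact_mod_cast hn
    have hβ' : (0:ℝ) < (β:ℝ) := by exact_mod_cast hβ
    have hun : u ≤ n := by
      have h1 : (u:ℝ) ≤ (n:ℝ) := by
        rw [hu, div_le_iff₀ hq0]
        nlinarith
      exact_mod_cast h1
    have hmu' : ∀ t, t ≤ β → m t ≤ u := by
      intro t ht
      have h1 : (m t : ℝ) ≤ (u:ℝ) := by
        rw [hm t ht, hu, div_le_div_iff₀ hβ' hq0]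
        have ht' : (t:ℝ) ≤ (β:ℝ) := by exact_mod_cast ht
        have e1 : (0:ℝ) ≤ p * (n:ℝ) * ((β:ℝ) - t) :=
          mul_nonneg (mul_pos hp0 hn').le (by linarith)
        have e2 : (0:ℝ) ≤ p * (n:ℝ) * (t:ℝ) * (1 - q) :=
          mul_nonneg (mul_nonneg (mul_pos hp0 hn').le (Nat.cast_nonneg t)) (by linarith)
        nlinarith [e1, e2]
      exact_mod_cast h1
    have hprob : ∀ t, t ≤ β → ∀ S : Finset (Fin n),
        (∑ ω, w ω * ∏ j ∈ S, (if j ∈ Z t ω then (1:ℝ) else 0))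
          = ∏ i ∈ Finset.range S.card, ((m t : ℝ) - i) / ((n:ℝ) - i) :=
      fun t ht S => prob_lemma w U (Z t) hun (hmu' t ht) hUcard hUunif
        (hZU t ht) (hZcard t ht) (hZunif t ht) S
    have hswap : ∀ {γ : Type} (s : Finset γ) (f : γ → Ω → ℝ),
        (∑ ω, w ω * ∑ x ∈ s, f x ω) = ∑ x ∈ s, ∑ ω, w ω * f x ω := by
      intro γ s f
      simp_rw [Finset.mul_sum]
      exact Finset.sum_comm
    have hpull : ∀ (a : ℝ) (f : Ω → ℝ), (∑ ω, w ω * (a * f ω)) = a * ∑ ω, w ω * f ω := by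
      intro a f
      rw [Finset.mul_sum]
      exact Finset.sum_congr rfl fun ω _ => by ring
    have hswap2 : ∀ {γ : Type} (s : Finset γ) (a : γ → ℝ) {δ : Type} (r : Finset δ)
        (f : γ → δ → ℝ),
        (∑ x ∈ s, a x * ∑ y ∈ r, f x y) = ∑ y ∈ r, ∑ x ∈ s, a x * f x y := by
      intro γ s a δ r f
      simp_rw [Finset.mul_sum]
      exact Finset.sum_comm
    have hfirst : (∑ ω, w ω * ((q / ((n : ℝ) * p)) * ∑ t ∈ Finset.range (β + 1), hcoef β q t *
        ∑ i, ∑ S ∈ (Nbhd i).powerset.filter (fun S => S.card ≤ β),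
          c i S * ∏ j ∈ S, (if j ∈ Z t ω then (1 : ℝ) else 0)))
        = (q / ((n:ℝ)*p)) * ∑ i, ∑ S ∈ (Nbhd i).powerset.filter (fun S => S.card ≤ β),
            c i S * (brak (u:ℝ) (n:ℝ) S.card - (if S.card = 0 then 1 else 0)) := by
      rw [hpull]
      congr 1
      rw [hswap]
      calc ∑ t ∈ Finset.range (β + 1), ∑ ω, w ω * (hcoef β q t *
            ∑ i, ∑ S ∈ (Nbhd i).powerset.filter (fun S => S.card ≤ β),
              c i S * ∏ j ∈ S, (if j ∈ Z t ω then (1 : ℝ) else 0))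
          = ∑ t ∈ Finset.range (β + 1), hcoef β q t *
            ∑ i, ∑ S ∈ (Nbhd i).powerset.filter (fun S => S.card ≤ β),
              c i S * ∏ i' ∈ Finset.range S.card, ((m t : ℝ) - i') / ((n:ℝ) - i') := by
            refine Finset.sum_congr rfl fun t ht => ?_
            have ht' : t ≤ β := Nat.lt_succ_iff.mp (Finset.mem_range.mp ht)
            rw [hpull]
            congr 1
            rw [hswap]
            refine Finset.sum_congr rfl fun i _ => ?_
            rw [hswap]
            refine Finset.sum_congr rfl fun S _ => ?_
            rw [hpull, hprob t ht' S]
        _ = ∑ i, ∑ S ∈ (Nbhd i).powerset.filter (fun S => S.card ≤ β),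
              c i S * ∑ t ∈ Finset.range (β + 1), hcoef β q t *
                ∏ i' ∈ Finset.range S.card, ((m t : ℝ) - i') / ((n:ℝ) - i') := by
            rw [hswap2]
            refine Finset.sum_congr rfl fun i _ => ?_
            rw [hswap2]
            refine Finset.sum_congr rfl fun S _ => ?_
            rw [Finset.mul_sum]
            exact Finset.sum_congr rfl fun t _ => by ring
        _ = ∑ i, ∑ S ∈ (Nbhd i).powerset.filter (fun S => S.card ≤ β),
              c i S * (brak (u:ℝ) (n:ℝ) S.card - (if S.card = 0 then 1 else 0)) := by
            refine Finset.sum_congr rfl fun i _ => ?_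
            refine Finset.sum_congr rfl fun S hS => ?_
            rw [hcoef_sum β hβ p q hq0.ne' n u m hu hm S.card
              (Finset.mem_filter.mp hS).2]
    rw [hfirst]
    have hfilter : ∀ i : Fin n,
        (∑ S ∈ (Nbhd i).powerset.filter (fun S => S.card ≤ β),
          c i S * (brak (u:ℝ) (n:ℝ) S.card - (if S.card = 0 then 1 else 0)))
        = ∑ S ∈ (Nbhd i).powerset.filter (fun S => S.Nonempty ∧ S.card ≤ β),
            c i S * brak (u:ℝ) (n:ℝ) S.card := by
      intro i
      rw [Finset.sum_filter, Finset.sum_filter]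
      refine Finset.sum_congr rfl fun S _ => ?_
      by_cases hS : S = ∅
      · subst hS
        simp [brak]
      · have hSne : S.Nonempty := Finset.nonempty_iff_ne_empty.mpr hS
        have hc : ¬ S.card = 0 := by
          simpa [Finset.card_eq_zero] using hS
        simp [hSne, hc]
    rw [Finset.sum_congr rfl fun i _ => hfilter i]
    have hexpand : ∀ i : Fin n,
        (∑ S ∈ (Nbhd i).powerset.filter (fun S => S.Nonempty ∧ S.card ≤ β),
          c i S * ((q / p) * brak (u:ℝ) (n:ℝ) S.card - 1))
        = (q / p) * (∑ S ∈ (Nbhd i).powerset.filter (fun S => S.Nonempty ∧ S.card ≤ β),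
            c i S * brak (u:ℝ) (n:ℝ) S.card)
          - ∑ S ∈ (Nbhd i).powerset.filter (fun S => S.Nonempty ∧ S.card ≤ β), c i S := by
      intro i
      rw [Finset.mul_sum, ← Finset.sum_sub_distrib]
      exact Finset.sum_congr rfl fun S _ => by ring
    rw [Finset.sum_congr rfl fun i _ => hexpand i, Finset.sum_sub_distrib, ← Finset.mul_sum]
    have hcq : q / ((n:ℝ) * p) = (1/(n:ℝ)) * (q / p) := by
      field_simp
    rw [hcq]
    ring
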